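/- If f ≤ g holds Ī-almost everywhere on 𝒮 (f, g : 𝒮 → [-∞,∞]), then σ̄_j f ≤ σ̄_j g holds Ī-almost everywhere, for every j ≥ 0. -/

import Mathlib

open Filter Set
open scoped Classical ENNReal

noncomputable section

abbrev Traj := ℕ → ℝ

/-- Portfolio value `Π^{V,H}_{j,n}`. -/
def PiVal (j n : ℕ) (V : ℝ) (H : ℕ → Traj → ℝ) (y : Traj) : ℝ :=
  V + ∑ i ∈ Finset.Ico j n, H i y * (y (i + 1) - y i)

/-- Non-anticipativity of a sequence of functions on a set of trajectories. -/
def NonAnticipOn (A : Set Traj) (H : ℕ → Traj → ℝ) : Prop :=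
  ∀ i, ∀ x ∈ A, ∀ y ∈ A, (∀ k ≤ i, x k = y k) → H i x = H i y

/-- Non-anticipativity (at time `j`) of a single extended-real-valued function. -/
def NonAnticipF (A : Set Traj) (j : ℕ) (g : Traj → EReal) : Prop :=
  ∀ x ∈ A, ∀ y ∈ A, (∀ k ≤ j, x k = y k) → g x = g y

/-- Conditional space `𝒮_{(x,j)}`. -/
def Cond (𝒮 : Set Traj) (x : Traj) (j : ℕ) : Set Traj :=
  {y ∈ 𝒮 | ∀ i ≤ j, y i = x i}

/-- `liminf_{n→∞} Π^{V,H}_{j,n}` as a value in `[0,∞]`. -/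
def limInfVal (j : ℕ) (V : ℝ) (H : ℕ → Traj → ℝ) (y : Traj) : ℝ≥0∞ :=
  Filter.liminf (fun n => ENNReal.ofReal (PiVal j n V H y)) Filter.atTop

/-- The conditional null operator `Ī_j` on a set `A` of trajectories. -/
def IUpOn (A : Set Traj) (j : ℕ) (f : Traj → ℝ≥0∞) : ℝ≥0∞ :=
  sInf { c | ∃ (V : ℕ → ℝ) (H : ℕ → ℕ → Traj → ℝ),
    (∀ m, NonAnticipOn A (H m)) ∧
    (∀ m n, ∀ y ∈ A, 0 ≤ PiVal j n (V m) (H m) y) ∧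
    (∀ y ∈ A, f y ≤ ∑' m, limInfVal j (V m) (H m) y) ∧
    c = ∑' m, ENNReal.ofReal (V m) }

/-- `Ī_j f (x)`, conditioned on the node `(x,j)`. -/
def IUp (𝒮 : Set Traj) (j : ℕ) (f : Traj → ℝ≥0∞) (x : Traj) : ℝ≥0∞ :=
  IUpOn (Cond 𝒮 x j) j f

/-- The conditional superhedging outer integral on a set `A`, starting at time `j`. -/
def sigmaUpOn (A : Set Traj) (j : ℕ) (f : Traj → EReal) : EReal :=
  sInf { c : EReal | ∃ (V0 : ℝ) (H0 : ℕ → Traj → ℝ) (n0 : ℕ) (V : ℕ → ℝ)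
      (H : ℕ → ℕ → Traj → ℝ),
    NonAnticipOn A H0 ∧ (∀ m, NonAnticipOn A (H m)) ∧
    (∀ m n, ∀ y ∈ A, 0 ≤ PiVal j n (V m) (H m) y) ∧
    (∀ y ∈ A, f y ≤ (PiVal j n0 V0 H0 y : EReal) +
      ((∑' m, limInfVal j (V m) (H m) y : ℝ≥0∞) : EReal)) ∧
    c = (V0 : EReal) + ((∑' m, ENNReal.ofReal (V m) : ℝ≥0∞) : EReal) }

/-- `σ̄_j f (x)`. -/
def sigmaUp (𝒮 : Set Traj) (j : ℕ) (f : Traj → EReal) (x : Traj) : EReal :=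
  sigmaUpOn (Cond 𝒮 x j) j f

/-- `σ̲_j f (x) = -σ̄_j (-f)(x)`. -/
def sigmaDown (𝒮 : Set Traj) (j : ℕ) (f : Traj → EReal) (x : Traj) : EReal :=
  - sigmaUp 𝒮 j (fun y => - f y) x

/-- A set is `Ī`-null. -/
def NullSet (𝒮 : Set Traj) (E : Set Traj) : Prop :=
  IUpOn 𝒮 0 (fun y => if y ∈ E then 1 else 0) = 0

/-- A property holds `Ī`-almost everywhere on `𝒮`. -/
def AEOn (𝒮 : Set Traj) (P : Traj → Prop) : Prop :=
  NullSet 𝒮 {y ∈ 𝒮 | ¬ P y}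

/-- Property `(L_{(x,j)})`, continuity from below at the node `(x,j)`. -/
def PropL (𝒮 : Set Traj) (x : Traj) (j : ℕ) : Prop :=
  ∀ (V0 : ℝ) (H0 : ℕ → Traj → ℝ) (n0 : ℕ) (V : ℕ → ℝ) (H : ℕ → ℕ → Traj → ℝ),
    NonAnticipOn (Cond 𝒮 x j) H0 → (∀ m, NonAnticipOn (Cond 𝒮 x j) (H m)) →
    (∀ m n, ∀ y ∈ Cond 𝒮 x j, 0 ≤ PiVal j n (V m) (H m) y) →
    (∀ y ∈ Cond 𝒮 x j, (PiVal j n0 V0 H0 y : EReal) ≤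
      ((∑' m, limInfVal j (V m) (H m) y : ℝ≥0∞) : EReal)) →
    (V0 : EReal) ≤ ((∑' m, ENNReal.ofReal (V m) : ℝ≥0∞) : EReal)

/-- Assumption `(L)`-a.e. -/
def LaeAssumption (𝒮 : Set Traj) : Prop :=
  (∀ x ∈ 𝒮, PropL 𝒮 x 0) ∧ NullSet 𝒮 {x ∈ 𝒮 | ∃ j, ¬ PropL 𝒮 x j}

/-- Up-down node. -/
def UpDownNode (𝒮 : Set Traj) (x : Traj) (j : ℕ) : Prop :=
  (∃ y ∈ Cond 𝒮 x j, x j < y (j + 1)) ∧ (∃ y ∈ Cond 𝒮 x j, y (j + 1) < x j)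

/-- Flat node. -/
def FlatNode (𝒮 : Set Traj) (x : Traj) (j : ℕ) : Prop :=
  ∀ y ∈ Cond 𝒮 x j, y (j + 1) = x j

/-- Arbitrage node. -/
def ArbitrageNode (𝒮 : Set Traj) (x : Traj) (j : ℕ) : Prop :=
  ¬ UpDownNode 𝒮 x j ∧ ¬ FlatNode 𝒮 x j

/-- Type II arbitrage node. -/
def TypeIINode (𝒮 : Set Traj) (x : Traj) (j : ℕ) : Prop :=
  ArbitrageNode 𝒮 x j ∧ ¬ ∃ y ∈ Cond 𝒮 x j, y (j + 1) = x j

/-- Trajectory based stopping time. -/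
def StoppingTime (𝒮 : Set Traj) (τ : Traj → ℕ∞) : Prop :=
  ∀ x ∈ 𝒮, ∀ y ∈ 𝒮, (∀ k : ℕ, (k : ℕ∞) ≤ τ x → x k = y k) → τ x = τ y

/-- `⊤`-dominant addition on `EReal`, implementing the convention `∞ + (−∞) = ∞`. -/
def eadd (a b : EReal) : EReal := if a = ⊤ ∨ b = ⊤ then ⊤ else a + b

/-- Subtraction `u − v = u + (−v)` with the convention `∞ + (−∞) = ∞`. -/
def esub (a b : EReal) : EReal := eadd a (-b)

/-- Supermartingale. -/
def TrajSupermartingale (𝒮 : Set Traj) (f : ℕ → Traj → EReal) : Prop :=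
  (∀ j, NonAnticipF 𝒮 j (f j)) ∧
  ∀ j, AEOn 𝒮 (fun x => sigmaUp 𝒮 j (f (j + 1)) x ≤ f j x)

-- ===== auxiliary lemmas =====

lemma pival_of_le {j n : ℕ} (h : n ≤ j) (V : ℝ) (H : ℕ → Traj → ℝ) (y : Traj) :
    PiVal j n V H y = V := by
  unfold PiVal
  rw [Finset.Ico_eq_empty (by omega), Finset.sum_empty, add_zero]

lemma pival_smul (t : ℝ) (j n : ℕ) (V : ℝ) (H : ℕ → Traj → ℝ) (y : Traj) :
    PiVal j n (t * V) (fun i z => t * H i z) y = t * PiVal j n V H y := by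
  simp only [PiVal, mul_add, Finset.mul_sum, mul_assoc]

lemma pival_shift {𝒮 : Set Traj} {H : ℕ → Traj → ℝ} (hH : NonAnticipOn 𝒮 H)
    {x y : Traj} (hx : x ∈ 𝒮) {j : ℕ} (hy : y ∈ Cond 𝒮 x j) (V : ℝ) {n : ℕ} (hn : j ≤ n) :
    PiVal j n (PiVal 0 j V H x) H y = PiVal 0 n V H y := by
  have hsum : ∀ i ∈ Finset.Ico 0 j,
      H i x * (x (i + 1) - x i) = H i y * (y (i + 1) - y i) := by
    intro i hi
    have hij : i < j := (Finset.mem_Ico.1 hi).2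
    have hxy : H i x = H i y := hH i x hx y hy.1 (fun k hk => (hy.2 k (by omega)).symm)
    rw [hxy, hy.2 (i + 1) (by omega), hy.2 i (by omega)]
  unfold PiVal
  rw [← Finset.sum_Ico_consecutive (fun i => H i y * (y (i + 1) - y i)) (Nat.zero_le j) hn,
    Finset.sum_congr rfl hsum]
  ring

lemma liminfVal_shift {𝒮 : Set Traj} {H : ℕ → Traj → ℝ} (hH : NonAnticipOn 𝒮 H)
    {x y : Traj} (hx : x ∈ 𝒮) {j : ℕ} (hy : y ∈ Cond 𝒮 x j) (V : ℝ) :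
    limInfVal j (PiVal 0 j V H x) H y = limInfVal 0 V H y := by
  apply Filter.liminf_congr
  filter_upwards [Filter.eventually_ge_atTop j] with n hn
  rw [pival_shift hH hx hy V hn]

lemma le_liminfVal_smul {t : ℝ} (ht : 0 ≤ t) (j : ℕ) (V : ℝ) (H : ℕ → Traj → ℝ) (y : Traj) :
    ENNReal.ofReal t * limInfVal j V H y ≤ limInfVal j (t * V) (fun i z => t * H i z) y := by
  have key : (fun n => ENNReal.ofReal (PiVal j n (t * V) (fun i z => t * H i z) y))
      = (fun _ => ENNReal.ofReal t) * fun n => ENNReal.ofReal (PiVal j n V H y) := by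
    funext n
    simp [pival_smul, ENNReal.ofReal_mul ht]
  unfold limInfVal
  rw [key]
  calc ENNReal.ofReal t * liminf (fun n => ENNReal.ofReal (PiVal j n V H y)) atTop
      = liminf (fun _ : ℕ => ENNReal.ofReal t) atTop *
        liminf (fun n => ENNReal.ofReal (PiVal j n V H y)) atTop := by rw [liminf_const]
    _ ≤ _ := ENNReal.le_liminf_mul

lemma pival_stop (j n : ℕ) (V : ℝ) (H : ℕ → Traj → ℝ) (y : Traj) :
    PiVal 0 n V (fun i z => if i < j then H i z else 0) y = PiVal 0 (min n j) V H y := by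
  unfold PiVal
  congr 1
  rw [← Finset.sum_subset (Finset.Ico_subset_Ico le_rfl (min_le_left n j))
    (fun i hi hni => ?_)]
  · apply Finset.sum_congr rfl
    intro i hi
    have : i < j := lt_of_lt_of_le (Finset.mem_Ico.1 hi).2 (min_le_right n j)
    simp only [if_pos this]
  · have h1 : i < n := (Finset.mem_Ico.1 hi).2
    have h2 : ¬ i < min n j := fun hc => hni (Finset.mem_Ico.2 ⟨Nat.zero_le _, hc⟩)
    have : ¬ i < j := by omega
    simp only [if_neg this, zero_mul]

lemma liminfVal_stop (j : ℕ) (V : ℝ) (H : ℕ → Traj → ℝ) (y : Traj) :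
    limInfVal 0 V (fun i z => if i < j then H i z else 0) y
      = ENNReal.ofReal (PiVal 0 j V H y) := by
  unfold limInfVal
  rw [Filter.liminf_congr (v := fun _ => ENNReal.ofReal (PiVal 0 j V H y)), liminf_const]
  filter_upwards [Filter.eventually_ge_atTop j] with n hn
  rw [pival_stop, min_eq_right hn]

def mV (V1 V2 : ℕ → ℝ) (m : ℕ) : ℝ := if Even m then V1 (m / 2) else V2 (m / 2)

def mH (H1 H2 : ℕ → ℕ → Traj → ℝ) (m : ℕ) : ℕ → Traj → ℝ :=
  if Even m then H1 (m / 2) else H2 (m / 2)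

lemma tsum_merge (G : ℝ → (ℕ → Traj → ℝ) → ℝ≥0∞) (V1 V2 : ℕ → ℝ)
    (H1 H2 : ℕ → ℕ → Traj → ℝ) :
    ∑' m, G (mV V1 V2 m) (mH H1 H2 m)
      = (∑' m, G (V1 m) (H1 m)) + ∑' m, G (V2 m) (H2 m) := by
  rw [← tsum_even_add_odd (f := fun m => G (mV V1 V2 m) (mH H1 H2 m))
    ENNReal.summable ENNReal.summable]
  congr 1
  · apply tsum_congr
    intro k
    have h1 : Even (2 * k) := ⟨k, two_mul k⟩
    have h2 : 2 * k / 2 = k := by omega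
    rw [mV, mH, if_pos h1, if_pos h1, h2]
  · apply tsum_congr
    intro k
    have h1 : ¬ Even (2 * k + 1) := by simp [Nat.even_add_one, parity_simps]
    have h2 : (2 * k + 1) / 2 = k := by omega
    rw [mV, mH, if_neg h1, if_neg h1, h2]

lemma ereal_le_of_forall_pos {a d : EReal} (hd : d ≠ ⊥)
    (h : ∀ δ : ℝ, 0 < δ → a ≤ d + (δ : EReal)) : a ≤ d := by
  by_contra hlt
  push_neg at hlt
  rcases EReal.lt_iff_exists_real_btwn.1 hlt with ⟨z, hz1, hz2⟩
  induction d with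
  | bot => exact hd rfl
  | coe r =>
    have hr : r < z := EReal.coe_lt_coe_iff.1 hz1
    have h2 := h (z - r) (by linarith)
    rw [← EReal.coe_add] at h2
    have h3 : a ≤ (z : EReal) := by
      convert h2 using 2
      ring
    exact (not_le.2 hz2) h3
  | top => exact (not_top_lt (hz1.trans hz2))

/-- a.e. monotonicity of the conditional outer integral. -/
theorem sigmaUp_mono_ae (𝒮 : Set Traj) (f g : Traj → EReal)
    (h : AEOn 𝒮 (fun y => f y ≤ g y)) (j : ℕ) :
    AEOn 𝒮 (fun x => sigmaUp 𝒮 j f x ≤ sigmaUp 𝒮 j g x) := by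
  classical
  unfold AEOn NullSet at h ⊢
  beta_reduce at h ⊢
  have hnull := h
  rw [← le_zero_iff]
  refine ENNReal.le_of_forall_pos_le_add fun ε hε _ => ?_
  rw [zero_add]
  -- Step 1: combine coverings of the null set into one of cost ≤ ε covering ∞·1_E.
  have key : ∀ k : ℕ, ∃ (V : ℕ → ℝ) (H : ℕ → ℕ → Traj → ℝ),
      (∀ m, NonAnticipOn 𝒮 (H m)) ∧
      (∀ m n, ∀ y ∈ 𝒮, 0 ≤ PiVal 0 n (V m) (H m) y) ∧
      (∀ y ∈ {y ∈ 𝒮 | ¬ f y ≤ g y}, (1 : ℝ≥0∞)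
          ≤ ∑' m, limInfVal 0 (V m) (H m) y) ∧
      ∑' m, ENNReal.ofReal (V m) ≤ (ε : ℝ≥0∞) * 2⁻¹ ^ (k + 1) := by
    intro k
    have hpos : (0 : ℝ≥0∞) < (ε : ℝ≥0∞) * 2⁻¹ ^ (k + 1) := by
      refine ENNReal.mul_pos ?_ ?_
      · exact_mod_cast hε.ne'
      · exact pow_ne_zero _ (ENNReal.inv_ne_zero.2 ENNReal.ofNat_ne_top)
    have hlt := lt_of_le_of_lt (le_of_eq hnull) hpos
    unfold IUpOn at hlt
    obtain ⟨c, ⟨V, H, h1, h2, h3, hc⟩, hclt⟩ := sInf_lt_iff.1 hlt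
    refine ⟨V, H, h1, h2, fun y hy => ?_, by rw [← hc]; exact hclt.le⟩
    have h4 := h3 y hy.1
    beta_reduce at h4
    rwa [if_pos hy] at h4
  choose Vk Hk hna hnn hcov hcost using key
  let e : ℕ ≃ ℕ × ℕ := (Denumerable.eqv (ℕ × ℕ)).symm
  let V : ℕ → ℝ := fun m => Vk (e m).1 ((e m).2)
  let H : ℕ → ℕ → Traj → ℝ := fun m => Hk (e m).1 ((e m).2)
  have hHna : ∀ m, NonAnticipOn 𝒮 (H m) := fun m => hna _ _
  have hHnn : ∀ m n, ∀ y ∈ 𝒮, 0 ≤ PiVal 0 n (V m) (H m) y := fun m n y hy => hnn _ _ n y hy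
  have tsum_reindex : ∀ (G : ℝ → (ℕ → Traj → ℝ) → ℝ≥0∞),
      ∑' m, G (V m) (H m) = ∑' (k) (i), G (Vk k i) (Hk k i) := by
    intro G
    rw [← ENNReal.tsum_prod]
    exact e.tsum_eq (fun p => G (Vk p.1 p.2) (Hk p.1 p.2))
  have hcost' : ∑' m, ENNReal.ofReal (V m) ≤ (ε : ℝ≥0∞) := by
    rw [tsum_reindex (fun v _ => ENNReal.ofReal v)]
    have hg : ∑' k : ℕ, (2⁻¹ : ℝ≥0∞) ^ (k + 1) = 1 := by
      rw [ENNReal.tsum_geometric_add_one, ENNReal.one_sub_inv_two, inv_inv]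
      exact ENNReal.inv_mul_cancel two_ne_zero ENNReal.ofNat_ne_top
    calc ∑' (k) (i), ENNReal.ofReal (Vk k i)
        ≤ ∑' k : ℕ, (ε : ℝ≥0∞) * 2⁻¹ ^ (k + 1) := ENNReal.tsum_le_tsum fun k => hcost k
      _ = (ε : ℝ≥0∞) * ∑' k : ℕ, (2⁻¹ : ℝ≥0∞) ^ (k + 1) := ENNReal.tsum_mul_left
      _ = (ε : ℝ≥0∞) := by rw [hg, mul_one]
  have hcovE : ∀ y ∈ {y ∈ 𝒮 | ¬ f y ≤ g y}, ∑' m, limInfVal 0 (V m) (H m) y = ⊤ := by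
    intro y hy
    rw [tsum_reindex (fun v hh => limInfVal 0 v hh y), ← top_le_iff]
    calc (⊤ : ℝ≥0∞) = ∑' _ : ℕ, (1 : ℝ≥0∞) :=
        (ENNReal.tsum_const_eq_top_of_ne_zero one_ne_zero).symm
      _ ≤ _ := ENNReal.tsum_le_tsum fun k => hcov k y hy
  -- Step 2: if the shifted cost at x is finite then σ̄_j f x ≤ σ̄_j g x.
  have main : ∀ x ∈ 𝒮, (∑' m, ENNReal.ofReal (PiVal 0 j (V m) (H m) x)) ≠ ⊤ →
      sigmaUp 𝒮 j f x ≤ sigmaUp 𝒮 j g x := by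
    intro x hx hcx
    unfold sigmaUp sigmaUpOn
    refine le_sInf fun d hd => ?_
    obtain ⟨V0, H0, n0, Vg, Hg, hH0, hHg, hgnn, hgcov, rfl⟩ := hd
    refine ereal_le_of_forall_pos ?_ fun δ hδ => ?_
    · rw [Ne, EReal.add_eq_bot_iff]
      push_neg
      exact ⟨EReal.coe_ne_bot V0, EReal.coe_ennreal_ne_bot _⟩
    obtain ⟨t, ht0, htc⟩ : ∃ t : ℝ, 0 < t ∧
        ENNReal.ofReal t * (∑' m, ENNReal.ofReal (PiVal 0 j (V m) (H m) x))
          ≤ ENNReal.ofReal δ := by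
      set cx := ∑' m, ENNReal.ofReal (PiVal 0 j (V m) (H m) x) with hcxdef
      have hcx' : cx ≠ ⊤ := by rw [hcxdef]; exact hcx
      set r := cx.toReal with hr
      have hr0 : 0 ≤ r := ENNReal.toReal_nonneg
      refine ⟨δ / (r + 1), by positivity, ?_⟩
      have hcx2 : cx = ENNReal.ofReal r := (ENNReal.ofReal_toReal hcx').symm
      rw [hcx2, ← ENNReal.ofReal_mul (by positivity)]
      apply ENNReal.ofReal_le_ofReal
      rw [div_mul_eq_mul_div, div_le_iff₀ (by positivity)]
      nlinarith
    refine le_trans (sInf_le ⟨V0, H0, n0,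
      mV Vg (fun m => t * PiVal 0 j (V m) (H m) x),
      mH Hg (fun m => fun i z => t * H m i z), hH0, ?_, ?_, ?_, rfl⟩) ?_
    · -- non-anticipativity
      intro m
      unfold mH
      split
      · exact hHg _
      · intro i a ha b hb hab
        show t * H (m / 2) i a = t * H (m / 2) i b
        rw [hHna (m / 2) i a ha.1 b hb.1 hab]
    · -- nonnegativity
      intro m n y hy
      unfold mV mH
      by_cases hm : Even m
      · rw [if_pos hm, if_pos hm]
        exact hgnn _ n y hy
      · rw [if_neg hm, if_neg hm]
        rw [pival_smul]
        apply mul_nonneg ht0.le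
        rcases le_total n j with hnj | hjn
        · rw [pival_of_le hnj]
          exact hHnn (m / 2) j x hx
        · rw [pival_shift (hHna (m / 2)) hx hy _ hjn]
          exact hHnn (m / 2) n y hy.1
    · -- coverage
      intro y hy
      have hmerge : (∑' m, limInfVal j
            (mV Vg (fun m => t * PiVal 0 j (V m) (H m) x) m)
            (mH Hg (fun m => fun i z => t * H m i z) m) y)
          = (∑' m, limInfVal j (Vg m) (Hg m) y)
            + ∑' m, limInfVal j (t * PiVal 0 j (V m) (H m) x)
                (fun i z => t * H m i z) y :=
        tsum_merge (fun v hh => limInfVal j v hh y) _ _ _ _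
      by_cases hyE : y ∈ {y ∈ 𝒮 | ¬ f y ≤ g y}
      · have hSx : (∑' m, limInfVal j (t * PiVal 0 j (V m) (H m) x)
            (fun i z => t * H m i z) y) = ⊤ := by
          rw [← top_le_iff]
          calc (⊤ : ℝ≥0∞)
              = ENNReal.ofReal t * ∑' m, limInfVal 0 (V m) (H m) y := by
                rw [hcovE y hyE, ENNReal.mul_top (ENNReal.ofReal_pos.2 ht0).ne']
            _ = ∑' m, ENNReal.ofReal t * limInfVal j (PiVal 0 j (V m) (H m) x) (H m) y := by
                rw [← ENNReal.tsum_mul_left]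
                exact tsum_congr fun m => by
                  rw [liminfVal_shift (hHna m) hx hy (V m)]
            _ ≤ _ := ENNReal.tsum_le_tsum fun m => le_liminfVal_smul ht0.le j _ (H m) y
        rw [hmerge, hSx, add_top, EReal.coe_ennreal_top,
          EReal.add_top_of_ne_bot (EReal.coe_ne_bot _)]
        exact le_top
      · have hfg : f y ≤ g y := by
          by_contra hc
          exact hyE ⟨hy.1, hc⟩
        refine hfg.trans ((hgcov y hy).trans ?_)
        apply add_le_add_right
        rw [hmerge]
        exact EReal.coe_ennreal_le_coe_ennreal_iff.2 le_self_add
    · -- cost bound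
      have hsplit : (∑' m, ENNReal.ofReal
            (mV Vg (fun m => t * PiVal 0 j (V m) (H m) x) m))
          = (∑' m, ENNReal.ofReal (Vg m))
            + ∑' m, ENNReal.ofReal (t * PiVal 0 j (V m) (H m) x) :=
        tsum_merge (fun v _ => ENNReal.ofReal v) _ _
          Hg (fun m => fun i z => t * H m i z)
      have hsx : (∑' m, ENNReal.ofReal (t * PiVal 0 j (V m) (H m) x))
          ≤ ENNReal.ofReal δ := by
        calc (∑' m, ENNReal.ofReal (t * PiVal 0 j (V m) (H m) x))
            = ∑' m, ENNReal.ofReal t * ENNReal.ofReal (PiVal 0 j (V m) (H m) x) :=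
              tsum_congr fun m => ENNReal.ofReal_mul ht0.le
          _ = ENNReal.ofReal t * ∑' m, ENNReal.ofReal (PiVal 0 j (V m) (H m) x) :=
              ENNReal.tsum_mul_left
          _ ≤ ENNReal.ofReal δ := htc
      rw [hsplit, EReal.coe_ennreal_add, ← add_assoc]
      apply add_le_add_right
      calc ((∑' m, ENNReal.ofReal (t * PiVal 0 j (V m) (H m) x) : ℝ≥0∞) : EReal)
          ≤ ((ENNReal.ofReal δ : ℝ≥0∞) : EReal) :=
            EReal.coe_ennreal_le_coe_ennreal_iff.2 hsx
        _ = (δ : EReal) := by rw [EReal.coe_ennreal_ofReal, max_eq_left hδ.le]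
  -- Step 3: the stopped combined covering covers the exceptional set.
  refine le_trans (sInf_le ⟨V, fun m i z => if i < j then H m i z else 0, ?_, ?_, ?_, rfl⟩)
    hcost'
  · intro m i a ha b hb hab
    show (if i < j then H m i a else 0) = (if i < j then H m i b else 0)
    split
    · exact hHna m i a ha b hb hab
    · rfl
  · intro m n y hy
    show 0 ≤ PiVal 0 n (V m) (fun i z => if i < j then H m i z else 0) y
    rw [pival_stop]
    exact hHnn m (min n j) y hy
  · intro y hy
    beta_reduce
    by_cases hyE : y ∈ {x ∈ 𝒮 | ¬ sigmaUp 𝒮 j f x ≤ sigmaUp 𝒮 j g x}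
    · rw [if_pos hyE]
      have hstop : (∑' m, limInfVal 0 (V m) (fun i z => if i < j then H m i z else 0) y)
          = ∑' m, ENNReal.ofReal (PiVal 0 j (V m) (H m) y) :=
        tsum_congr fun m => liminfVal_stop j (V m) (H m) y
      have htop : (∑' m, ENNReal.ofReal (PiVal 0 j (V m) (H m) y)) = ⊤ := by
        by_contra hne
        exact hyE.2 (main y hyE.1 hne)
      rw [hstop, htop]
      exact le_top
    · rw [if_neg hyE]
      exact zero_le

end
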